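/- arXiv:1109.6515 — 2 statements merged into one kernel-verified Lean document; each statement's English description precedes it below -/
import Mathlib

section
/- Let K be a field, L/K a field extension, and C a K-linear abelian category. Then the base change category C_L is an abelian category: every morphism in C_L has a kernel and a cokernel, every monomorphism is a kernel, and every epimorphism is a cokernel. -/
open CategoryTheory CategoryTheory.Limits

universe v u

variable (K : Type*) [Field K] (L : Type*) [Field L] [Algebra K L]
variable (C : Type u) [Category.{v} C] [Preadditive C] [Linear K C]

structure BaseChange where
  obj : C
  str : L →ₐ[K] End obj

namespace BaseChange

variable {K L C}

@[ext]
structure Hom (X Y : BaseChange K L C) where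
  hom : X.obj ⟶ Y.obj
  comm : ∀ l : L, X.str l ≫ hom = hom ≫ Y.str l

instance : Category (BaseChange K L C) where
  Hom X Y := Hom X Y
  id X := ⟨𝟙 X.obj, fun l => by simp⟩
  comp {X Y Z} f g := ⟨f.hom ≫ g.hom, fun l => by
    rw [← Category.assoc, f.comm, Category.assoc, g.comm, Category.assoc]⟩

@[ext]
lemma hom_ext {X Y : BaseChange K L C} {f g : X ⟶ Y} (h : f.hom = g.hom) : f = g :=
  Hom.ext h

@[simp] lemma id_hom (X : BaseChange K L C) : Hom.hom (𝟙 X) = 𝟙 X.obj := rfl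

@[simp] lemma comp_hom {X Y Z : BaseChange K L C} (f : X ⟶ Y) (g : Y ⟶ Z) :
    (f ≫ g).hom = f.hom ≫ g.hom := rfl

section Preadditive

variable {X Y : BaseChange K L C}

instance : Zero (X ⟶ Y) := ⟨⟨0, fun l => by simp⟩⟩
instance : Add (X ⟶ Y) :=
  ⟨fun f g => ⟨f.hom + g.hom, fun l => by
    simp [Preadditive.comp_add, Preadditive.add_comp, f.comm, g.comm]⟩⟩
instance : Neg (X ⟶ Y) :=
  ⟨fun f => ⟨-f.hom, fun l => by simp [f.comm]⟩⟩
instance : Sub (X ⟶ Y) :=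
  ⟨fun f g => ⟨f.hom - g.hom, fun l => by
    simp [Preadditive.comp_sub, Preadditive.sub_comp, f.comm, g.comm]⟩⟩
instance : SMul ℕ (X ⟶ Y) :=
  ⟨fun n f => ⟨n • f.hom, fun l => by simp [f.comm]⟩⟩
instance : SMul ℤ (X ⟶ Y) :=
  ⟨fun n f => ⟨n • f.hom, fun l => by simp [f.comm]⟩⟩

@[simp] lemma zero_hom : (0 : X ⟶ Y).hom = 0 := rfl
@[simp] lemma add_hom (f g : X ⟶ Y) : (f + g).hom = f.hom + g.hom := rfl
@[simp] lemma neg_hom (f : X ⟶ Y) : (-f).hom = -f.hom := rfl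
@[simp] lemma sub_hom (f g : X ⟶ Y) : (f - g).hom = f.hom - g.hom := rfl

instance : AddCommGroup (X ⟶ Y) :=
  Function.Injective.addCommGroup (Hom.hom : (X ⟶ Y) → (X.obj ⟶ Y.obj))
    (fun _ _ h => Hom.ext h) rfl (fun _ _ => rfl) (fun _ => rfl) (fun _ _ => rfl)
    (fun _ _ => rfl) (fun _ _ => rfl)

instance : Preadditive (BaseChange K L C) where
  add_comp _ _ _ f f' g := by apply hom_ext; simp [Preadditive.add_comp]
  comp_add _ _ _ f g g' := by apply hom_ext; simp [Preadditive.comp_add]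

end Preadditive

end BaseChange

namespace BaseChange

section AbelianAux

open CategoryTheory.Limits ZeroObject

variable {K : Type*} [Field K] {L : Type*} [Field L] [Algebra K L]
variable {C : Type u} [Category.{v} C] [Abelian C] [Linear K C]

variable {X Y : BaseChange K L C}

section Helpers

variable {P Q : C}

@[simp] lemma End_add_comp (f g : End P) (h : P ⟶ Q) :
    (f + g) ≫ h = f ≫ h + g ≫ h := Preadditive.add_comp _ _ _ _ _ _

@[simp] lemma comp_End_add (h : P ⟶ Q) (f g : End Q) :
    h ≫ (f + g) = h ≫ f + h ≫ g := Preadditive.comp_add _ _ _ _ _ _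

@[simp] lemma End_smul_comp (k : K) (f : End P) (h : P ⟶ Q) :
    (k • f) ≫ h = k • (f ≫ h) := Linear.smul_comp _ _ _ _ _ _

@[simp] lemma comp_End_smul (h : P ⟶ Q) (k : K) (f : End Q) :
    h ≫ (k • f) = k • (h ≫ f) := Linear.comp_smul _ _ _ _ _ _

end Helpers

/-- The kernel object. -/
@[reducible] noncomputable def kerObj (f : X ⟶ Y) : BaseChange K L C where
  obj := kernel f.hom
  str :=
    { toFun := fun l => kernel.lift f.hom (kernel.ι f.hom ≫ X.str l)
        (by rw [Category.assoc, f.comm, ← Category.assoc, kernel.condition, zero_comp])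
      map_one' := by apply equalizer.hom_ext; simp [End.one_def]
      map_mul' := fun a b => by
        apply equalizer.hom_ext
        simp [End.mul_def, map_mul]
      map_zero' := by apply equalizer.hom_ext; simp
      map_add' := fun a b => by
        apply equalizer.hom_ext
        simp [Preadditive.comp_add, Preadditive.add_comp]
      commutes' := fun k => by
        apply equalizer.hom_ext
        simp [Algebra.algebraMap_eq_smul_one, End.one_def, Linear.comp_smul,
          Linear.smul_comp] }

@[simp] lemma kerObj_str (f : X ⟶ Y) (l : L) :
    (kerObj f).str l = kernel.lift f.hom (kernel.ι f.hom ≫ X.str l)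
      (by rw [Category.assoc, f.comm, ← Category.assoc, kernel.condition, zero_comp]) := rfl

/-- The kernel inclusion. -/
noncomputable def kerι (f : X ⟶ Y) : kerObj f ⟶ X :=
  ⟨kernel.ι f.hom, fun l => kernel.lift_ι _ _ _⟩

@[simp] lemma kerι_hom (f : X ⟶ Y) : (kerι f).hom = kernel.ι f.hom := rfl

lemma kerι_comp (f : X ⟶ Y) : kerι f ≫ f = 0 :=
  hom_ext (kernel.condition f.hom)

/-- The kernel fork is a limit. -/
noncomputable def kerIsLimit (f : X ⟶ Y) :
    IsLimit (KernelFork.ofι (kerι f) (kerι_comp f)) :=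
  KernelFork.IsLimit.ofι _ _
    (fun {W} k hk =>
      ⟨kernel.lift f.hom k.hom (by simpa using congrArg Hom.hom hk), fun l => by
        apply equalizer.hom_ext
        simp [k.comm]⟩)
    (fun {W} k hk => hom_ext (by simp))
    (fun {W} k hk m hm => hom_ext (by
      apply equalizer.hom_ext
      simpa using congrArg Hom.hom hm))

instance : HasKernels (BaseChange K L C) :=
  ⟨fun {_ _} f => HasLimit.mk ⟨_, kerIsLimit f⟩⟩

/-- The cokernel object. -/
@[reducible] noncomputable def cokerObj (f : X ⟶ Y) : BaseChange K L C where
  obj := cokernel f.hom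
  str :=
    { toFun := fun l => cokernel.desc f.hom (Y.str l ≫ cokernel.π f.hom)
        (by rw [← Category.assoc, ← f.comm, Category.assoc, cokernel.condition, comp_zero])
      map_one' := by apply coequalizer.hom_ext; simp [End.one_def]
      map_mul' := fun a b => by
        apply coequalizer.hom_ext
        simp [End.mul_def, map_mul]
      map_zero' := by apply coequalizer.hom_ext; simp
      map_add' := fun a b => by
        apply coequalizer.hom_ext
        simp [Preadditive.comp_add, Preadditive.add_comp]
      commutes' := fun k => by
        apply coequalizer.hom_ext
        simp [Algebra.algebraMap_eq_smul_one, End.one_def, Linear.comp_smul,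
          Linear.smul_comp] }

@[simp] lemma cokerObj_str (f : X ⟶ Y) (l : L) :
    (cokerObj f).str l = cokernel.desc f.hom (Y.str l ≫ cokernel.π f.hom)
      (by rw [← Category.assoc, ← f.comm, Category.assoc, cokernel.condition, comp_zero]) := rfl

/-- The cokernel projection. -/
noncomputable def cokerπ (f : X ⟶ Y) : Y ⟶ cokerObj f :=
  ⟨cokernel.π f.hom, fun l => (cokernel.π_desc _ _ _).symm⟩

@[simp] lemma cokerπ_hom (f : X ⟶ Y) : (cokerπ f).hom = cokernel.π f.hom := rfl

lemma comp_cokerπ (f : X ⟶ Y) : f ≫ cokerπ f = 0 :=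
  hom_ext (cokernel.condition f.hom)

/-- The cokernel cofork is a colimit. -/
noncomputable def cokerIsColimit (f : X ⟶ Y) :
    IsColimit (CokernelCofork.ofπ (cokerπ f) (comp_cokerπ f)) :=
  CokernelCofork.IsColimit.ofπ _ _
    (fun {W} k hk =>
      ⟨cokernel.desc f.hom k.hom (by simpa using congrArg Hom.hom hk), fun l => by
        apply coequalizer.hom_ext
        simp [k.comm]⟩)
    (fun {W} k hk => hom_ext (by simp))
    (fun {W} k hk m hm => hom_ext (by
      apply coequalizer.hom_ext
      simpa using congrArg Hom.hom hm))

instance : HasCokernels (BaseChange K L C) :=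
  ⟨fun {_ _} f => HasColimit.mk ⟨_, cokerIsColimit f⟩⟩

/-- The zero object. -/
noncomputable def zeroObj : BaseChange K L C where
  obj := 0
  str :=
    { toFun := fun _ => 1
      map_one' := rfl
      map_mul' := fun _ _ => (isZero_zero C).eq_of_src _ _
      map_zero' := (isZero_zero C).eq_of_src _ _
      map_add' := fun _ _ => (isZero_zero C).eq_of_src _ _
      commutes' := fun _ => (isZero_zero C).eq_of_src _ _ }

lemma zeroObj_isZero : IsZero ((zeroObj : BaseChange K L C).obj) := isZero_zero C

instance : HasZeroObject (BaseChange K L C) := by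
  refine ⟨zeroObj, ?_, ?_⟩
  · intro W
    exact ⟨⟨⟨0⟩, fun a => hom_ext (zeroObj_isZero.eq_of_src _ _)⟩⟩
  · intro W
    exact ⟨⟨⟨0⟩, fun a => hom_ext (zeroObj_isZero.eq_of_tgt _ _)⟩⟩

/-- The binary product object. -/
@[reducible] noncomputable def prodObj (X Y : BaseChange K L C) : BaseChange K L C where
  obj := X.obj ⊞ Y.obj
  str :=
    { toFun := fun l => biprod.map (X.str l) (Y.str l)
      map_one' := by
        apply biprod.hom_ext <;> simp [End.one_def]
      map_mul' := fun a b => by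
        apply biprod.hom_ext <;> simp [End.mul_def, map_mul]
      map_zero' := by
        apply biprod.hom_ext <;> simp
      map_add' := fun a b => by
        apply biprod.hom_ext <;>
          simp [Preadditive.comp_add, Preadditive.add_comp]
      commutes' := fun k => by
        apply biprod.hom_ext <;>
          simp [Algebra.algebraMap_eq_smul_one, End.one_def, Linear.comp_smul,
            Linear.smul_comp] }

/-- First projection. -/
noncomputable def prodFst (X Y : BaseChange K L C) : prodObj X Y ⟶ X :=
  ⟨biprod.fst, fun l => by simp [prodObj]⟩

/-- Second projection. -/
noncomputable def prodSnd (X Y : BaseChange K L C) : prodObj X Y ⟶ Y :=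
  ⟨biprod.snd, fun l => by simp [prodObj]⟩

/-- The binary fan is a limit. -/
noncomputable def prodIsLimit (X Y : BaseChange K L C) :
    IsLimit (BinaryFan.mk (prodFst X Y) (prodSnd X Y)) :=
  BinaryFan.isLimitMk
    (fun s =>
      ⟨biprod.lift (BinaryFan.fst s).hom (BinaryFan.snd s).hom, fun l => by
        apply biprod.hom_ext
        · simp [prodObj, prodFst, prodSnd]; exact s.fst.comm l
        · simp [prodObj, prodFst, prodSnd]; exact s.snd.comm l⟩)
    (fun s => hom_ext (by simp [prodFst]))
    (fun s => hom_ext (by simp [prodSnd]))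
    (fun s m h1 h2 => hom_ext (by
      apply biprod.hom_ext
      · simpa [prodFst] using congrArg Hom.hom h1
      · simpa [prodSnd] using congrArg Hom.hom h2))

instance : HasBinaryProducts (BaseChange K L C) := by
  have : ∀ (X Y : BaseChange K L C), HasLimit (pair X Y) := fun X Y =>
    HasLimit.mk ⟨_, prodIsLimit X Y⟩
  exact hasBinaryProducts_of_hasLimit_pair _

instance : HasFiniteProducts (BaseChange K L C) :=
  hasFiniteProducts_of_has_binary_and_terminal

lemma mono_hom (f : X ⟶ Y) [Mono f] : Mono f.hom := by
  have h0 : kerι f = 0 := by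
    rw [← cancel_mono f, kerι_comp, zero_comp]
  exact Abelian.mono_of_kernel_ι_eq_zero _ (by simpa using congrArg Hom.hom h0)

lemma epi_hom (f : X ⟶ Y) [Epi f] : Epi f.hom := by
  have h0 : cokerπ f = 0 := by
    rw [← cancel_epi f, comp_cokerπ, comp_zero]
  exact Abelian.epi_of_cokernel_π_eq_zero _ (by simpa using congrArg Hom.hom h0)

/-- Every mono is normal. -/
noncomputable def normalMono (f : X ⟶ Y) [Mono f] : NormalMono f := by
  have := mono_hom f
  have hl := Abelian.monoIsKernelOfCokernel
    (CokernelCofork.ofπ (cokernel.π f.hom) (cokernel.condition f.hom))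
    (cokernelIsCokernel f.hom)
  refine
    { Z := cokerObj f
      g := cokerπ f
      w := comp_cokerπ f
      isLimit := KernelFork.IsLimit.ofι _ _
        (fun {W} k hk =>
          ⟨hl.lift (KernelFork.ofι k.hom (by simpa using congrArg Hom.hom hk)), fun l => ?_⟩)
        (fun {W} k hk => hom_ext (hl.fac _ WalkingParallelPair.zero))
        (fun {W} k hk m hm => hom_ext ?_) }
  · have fac : hl.lift (KernelFork.ofι k.hom (by simpa using congrArg Hom.hom hk)) ≫ f.hom
        = k.hom := hl.fac _ WalkingParallelPair.zero
    rw [← cancel_mono f.hom]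
    simp only [Category.assoc]
    rw [fac, k.comm, f.comm, ← Category.assoc, fac]
  · have fac : hl.lift (KernelFork.ofι k.hom (by simpa using congrArg Hom.hom hk)) ≫ f.hom
        = k.hom := hl.fac _ WalkingParallelPair.zero
    rw [← cancel_mono f.hom, fac]
    simpa using congrArg Hom.hom hm

/-- Every epi is normal. -/
noncomputable def normalEpi (f : X ⟶ Y) [Epi f] : NormalEpi f := by
  have := epi_hom f
  have hl := Abelian.epiIsCokernelOfKernel
    (KernelFork.ofι (kernel.ι f.hom) (kernel.condition f.hom))
    (kernelIsKernel f.hom)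
  refine
    { W := kerObj f
      g := kerι f
      w := kerι_comp f
      isColimit := CokernelCofork.IsColimit.ofπ _ _
        (fun {W} k hk =>
          ⟨hl.desc (CokernelCofork.ofπ k.hom (by simpa using congrArg Hom.hom hk)), fun l => ?_⟩)
        (fun {W} k hk => hom_ext (hl.fac _ WalkingParallelPair.one))
        (fun {W} k hk m hm => hom_ext ?_) }
  · have fac : f.hom ≫ hl.desc (CokernelCofork.ofπ k.hom (by simpa using congrArg Hom.hom hk))
        = k.hom := hl.fac _ WalkingParallelPair.one
    rw [← cancel_epi f.hom]
    simp only [← Category.assoc]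
    rw [← f.comm, Category.assoc, fac, k.comm]
  · have fac : f.hom ≫ hl.desc (CokernelCofork.ofπ k.hom (by simpa using congrArg Hom.hom hk))
        = k.hom := hl.fac _ WalkingParallelPair.one
    rw [← cancel_epi f.hom, fac]
    simpa using congrArg Hom.hom hm

end AbelianAux

end BaseChange

/-- **Statement 2.** If `C` is a `K`-linear abelian category, then the base change
category `C_L` is abelian. -/
theorem baseChange_abelian (K : Type*) [Field K] (L : Type*) [Field L] [Algebra K L]
    (C : Type u) [Category.{v} C] [Abelian C] [CategoryTheory.Linear K C] :
    Nonempty (Abelian (BaseChange K L C)) := by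
  exact ⟨{ toPreadditive := inferInstance
           normalMonoOfMono := fun f _ => ⟨BaseChange.normalMono f⟩
           normalEpiOfEpi := fun f _ => ⟨BaseChange.normalEpi f⟩ }⟩
end

section
/- Let L/K be a finite Galois extension of fields with Galois group G = Gal(L/K). Then the K-algebra homomorphism L ⊗_K L → (G → L), determined on pure tensors by l₁ ⊗ l₂ ↦ (g ↦ g(l₁) · l₂), from the tensor product algebra to the K-algebra of L-valued functions on G with pointwise operations, is bijective. -/
open scoped TensorProduct

/-- The canonical `K`-algebra homomorphism `L ⊗[K] L → (Gal(L/K) → L)` determined by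
`l₁ ⊗ l₂ ↦ (g ↦ g l₁ * l₂)`. -/
noncomputable def galoisPairing (K : Type*) [Field K] (L : Type*) [Field L] [Algebra K L] :
    L ⊗[K] L →ₐ[K] ((L ≃ₐ[K] L) → L) :=
  Algebra.TensorProduct.lift
    (Pi.algHom K _ fun g : L ≃ₐ[K] L => (g : L →ₐ[K] L))
    (Pi.constAlgHom K (L ≃ₐ[K] L) L)
    (fun _ _ => Commute.all _ _)

/-- **Statement 17.** For a finite Galois extension `L/K` with Galois group
`G = Gal(L/K)`, the `K`-algebra homomorphism `L ⊗[K] L → (G → L)` determined by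
`l₁ ⊗ l₂ ↦ (g ↦ g l₁ · l₂)` is bijective. -/
theorem galoisPairing_bijective
    (K : Type*) [Field K] (L : Type*) [Field L] [Algebra K L]
    [FiniteDimensional K L] [IsGalois K L] :
    Function.Bijective (galoisPairing K L) := by
  classical
  set F := galoisPairing K L with hF
  have hS : ∀ a : L, F (a ⊗ₜ[K] 1) = fun g : L ≃ₐ[K] L => g a := by
    intro a; funext g; simp [hF, galoisPairing]
  have hconst : ∀ c : L, F ((1 : L) ⊗ₜ[K] c) = fun _ => c := by
    intro c; funext g; simp [hF, galoisPairing]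
  have hsurj : Function.Surjective F := by
    have hspan : Submodule.span L
        (Set.range fun a : L => fun g : L ≃ₐ[K] L => g a) = ⊤ := by
      by_contra h
      obtain ⟨f, hf0, hf⟩ := Submodule.exists_dual_map_eq_bot_of_lt_top
        (lt_top_iff_ne_top.2 h) inferInstance
      have hker : ∀ a : L, f (fun g : L ≃ₐ[K] L => g a) = 0 := by
        intro a
        have hmem : (fun g : L ≃ₐ[K] L => g a) ∈
            Submodule.span L (Set.range fun a : L => fun g : L ≃ₐ[K] L => g a) :=
          Submodule.subset_span ⟨a, rfl⟩
        have : f (fun g : L ≃ₐ[K] L => g a) ∈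
            (Submodule.span L (Set.range fun a : L => fun g : L ≃ₐ[K] L => g a)).map f :=
          Submodule.mem_map_of_mem hmem
        rwa [hf, Submodule.mem_bot] at this
      have hli : LinearIndependent L
          (fun g : L ≃ₐ[K] L => ((g : L →ₐ[K] L).toLinearMap : L →ₗ[K] L)) :=
        (linearIndependent_toLinearMap K L L).comp
          (fun g : L ≃ₐ[K] L => (g : L →ₐ[K] L)) (AlgEquiv.coe_algHom_injective)
      have hx : ∀ g : L ≃ₐ[K] L, f ((Pi.single g 1 : (L ≃ₐ[K] L) → L)) = 0 := by
        refine Fintype.linearIndependent_iff.1 hli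
          (fun g => f ((Pi.single g 1 : (L ≃ₐ[K] L) → L))) ?_
      -- show the linear combination vanishes
        ext a
        have hdecomp : (fun g : L ≃ₐ[K] L => g a) =
            ∑ g : L ≃ₐ[K] L, (g a) • (Pi.single g 1 : (L ≃ₐ[K] L) → L) := by
          funext g'
          rw [Finset.sum_apply]
          simp [Pi.single_apply, eq_comm]
        have := hker a
        rw [hdecomp, map_sum] at this
        simp only [map_smul, smul_eq_mul] at this
        simpa [mul_comm] using this
      apply hf0
      apply LinearMap.ext
      intro v
      show f v = 0
      have hv : v = ∑ g : L ≃ₐ[K] L, (v g) • (Pi.single g 1 : (L ≃ₐ[K] L) → L) := by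
        funext g'
        rw [Finset.sum_apply]
        simp [Pi.single_apply, eq_comm]
      rw [hv, map_sum]
      simp [hx]
    intro v
    have hv : v ∈ Submodule.span L (Set.range fun a : L => fun g : L ≃ₐ[K] L => g a) := by
      rw [hspan]; trivial
    induction hv using Submodule.span_induction with
    | mem x hx => obtain ⟨a, rfl⟩ := hx; exact ⟨a ⊗ₜ 1, hS a⟩
    | zero => exact ⟨0, map_zero F⟩
    | add x y _ _ hx hy =>
      obtain ⟨u, rfl⟩ := hx; obtain ⟨w, rfl⟩ := hy
      exact ⟨u + w, map_add F u w⟩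
    | smul c x _ hx =>
      obtain ⟨u, rfl⟩ := hx
      refine ⟨((1 : L) ⊗ₜ c) * u, ?_⟩
      rw [map_mul, hconst]
      funext g
      simp [mul_comm]
  have hdim : Module.finrank K (L ⊗[K] L) = Module.finrank K ((L ≃ₐ[K] L) → L) := by
    rw [Module.finrank_tensorProduct, Module.finrank_pi_fintype, Finset.sum_const,
      smul_eq_mul, Finset.card_univ, Fintype.card_eq_nat_card, IsGalois.card_aut_eq_finrank]
  exact ⟨(LinearMap.injective_iff_surjective_of_finrank_eq_finrank
      (f := F.toLinearMap) hdim).2 hsurj, hsurj⟩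
end
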